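/- arXiv:0804.0882 — 2 statements merged into one kernel-verified Lean document; each statement's English description precedes it below -/
import Mathlib

section
/- The class of positroids is closed under the operation M ↦ { H ∈ M : j ∈ H } (when this is nonempty): if M is a positroid on [n] and j is a non-fixed point of its decorated permutation, then M' = { H ∈ M : j ∈ H } is itself a positroid, with Grassmann necklace K_a = (I_a \ {phi(a)}) ∪ {j} where phi(a) = j if j ∈ I_a and phi(a) = max_a(I_a \ I_j) otherwise. -/
open Finset

/-- Position of `a` in the cyclic (linear) order starting at `t` on `Fin n`. -/
def cval {n : ℕ} (t a : Fin n) : ℕ := ((a - t : Fin n) : ℕ)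

/-- Gale order on finsets of `Fin n` induced by the linear order with key `f`:
compare the sorted lists of keys coordinatewise. -/
def galeLEKey {n : ℕ} (f : Fin n → ℕ) (A B : Finset (Fin n)) : Prop :=
  List.Forall₂ (· ≤ ·) ((A.image f).sort (· ≤ ·)) ((B.image f).sort (· ≤ ·))

/-- Gale order `≤_t` induced by the cyclic order starting at `t`. -/
def galeLE {n : ℕ} (t : Fin n) (A B : Finset (Fin n)) : Prop :=
  galeLEKey (cval t) A B

/-- The set of maximal elements of `D` w.r.t. `≤_a` (a singleton when `D` is nonempty). -/
def cmax {n : ℕ} (a : Fin n) (D : Finset (Fin n)) : Finset (Fin n) :=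
  D.filter (fun x => ∀ y ∈ D, cval a y ≤ cval a x)

/-- The set of minimal elements of `D` w.r.t. `≤_a` (a singleton when `D` is nonempty). -/
def cmin {n : ℕ} (a : Fin n) (D : Finset (Fin n)) : Finset (Fin n) :=
  D.filter (fun x => ∀ y ∈ D, cval a x ≤ cval a y)

/-- A Grassmann necklace on `[n]`. -/
def IsGrassmannNecklace {n : ℕ} [NeZero n] (I : Fin n → Finset (Fin n)) : Prop :=
  ∀ i : Fin n,
    (i ∈ I i → ∃ j : Fin n, I (i + 1) = insert j (I i \ {i})) ∧
    (i ∉ I i → I (i + 1) = I i)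

/-- A decorated permutation: a permutation with fixed points colored by `1` or `-1`
(non-fixed points carry the dummy color `1`). -/
structure DecoratedPerm (n : ℕ) where
  π : Equiv.Perm (Fin n)
  col : Fin n → ℤ
  col_fixed : ∀ i, π i = i → col i = 1 ∨ col i = -1
  col_nonfixed : ∀ i, π i ≠ i → col i = 1

/-- The Grassmann necklace associated to a decorated permutation:
`I_r = { i : i <_r π⁻¹(i), or π(i) = i and col(i) = -1 }`. -/
def necklaceOf {n : ℕ} (P : DecoratedPerm n) : Fin n → Finset (Fin n) :=
  fun r => Finset.univ.filter
    (fun i => cval r i < cval r (P.π.symm i) ∨ (P.π i = i ∧ P.col i = -1))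

/-- The forward map from Grassmann necklaces to decorated permutations:
`P` corresponds to the necklace `I`. -/
def Corresponds {n : ℕ} [NeZero n] (I : Fin n → Finset (Fin n)) (P : DecoratedPerm n) : Prop :=
  ∀ i : Fin n,
    ((I (i + 1) = I i ∧ i ∉ I i) → (P.π i = i ∧ P.col i = 1)) ∧
    ((I (i + 1) = I i ∧ i ∈ I i) → (P.π i = i ∧ P.col i = -1)) ∧
    (∀ j : Fin n, j ≠ i → i ∈ I i → I (i + 1) = insert j (I i \ {i}) → P.π i = j)

/-- `phiSet I j a` is `{j}` if `j ∈ I_a`, and otherwise `{max_a (I_a \ I_j)}`. -/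
def phiSet {n : ℕ} (I : Fin n → Finset (Fin n)) (j a : Fin n) : Finset (Fin n) :=
  if j ∈ I a then {j} else cmax a (I a \ I j)

/-- One pass of the contraction algorithm (fuel-indexed; the loop walks `a ← a+1`). -/
def contractLoop {n : ℕ} [NeZero n] (π : Equiv.Perm (Fin n)) (j : Fin n) :
    ℕ → (Fin n → Fin n) → (Fin n → ℤ) → Fin n → Fin n →
      (Fin n → Fin n) × (Fin n → ℤ)
  | 0, μ, c, q, a => (Function.update μ a q, c)
  | fuel + 1, μ, c, q, a =>
    if π a = j then (Function.update μ a q, c)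
    else if q = a ∨ (cval (a + 1) q < cval (a + 1) (π a) ∧
                      cval (a + 1) (π a) < cval (a + 1) j) then
      contractLoop π j fuel (Function.update μ a q)
        (if q = a then Function.update c a 1 else c) (π a) (a + 1)
    else
      contractLoop π j fuel μ c q (a + 1)

/-- The contraction algorithm: output `(μ, col')` from `(π, col)` and `j`. -/
def contractAlg {n : ℕ} [NeZero n] (π : Equiv.Perm (Fin n)) (col : Fin n → ℤ) (j : Fin n) :
    (Fin n → Fin n) × (Fin n → ℤ) :=
  contractLoop π j n (Function.update (⇑π) j j) (Function.update col j 1) (π j) (j + 1)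

/-- One pass of the restriction algorithm (the loop walks `a ← a-1`). -/
def restrictLoop {n : ℕ} [NeZero n] (π : Equiv.Perm (Fin n)) (j : Fin n) :
    ℕ → (Fin n → Fin n) → (Fin n → ℤ) → Fin n → Fin n →
      (Fin n → Fin n) × (Fin n → ℤ)
  | 0, μ, c, q, a => (Function.update μ a q, c)
  | fuel + 1, μ, c, q, a =>
    if π a = j then (Function.update μ a q, c)
    else if q = a ∨ (cval a j < cval a (π a) ∧ cval a (π a) < cval a q) then
      restrictLoop π j fuel (Function.update μ a q)
        (if q = a then Function.update c a 1 else c) (π a) (a - 1)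
    else
      restrictLoop π j fuel μ c q (a - 1)

/-- The restriction algorithm: output `(μ, col')` from `(π, col)` and `j`. -/
def restrictAlg {n : ℕ} [NeZero n] (π : Equiv.Perm (Fin n)) (col : Fin n → ℤ) (j : Fin n) :
    (Fin n → Fin n) × (Fin n → ℤ) :=
  restrictLoop π j n (Function.update (⇑π) j j) (Function.update col j 1) (π j) (j - 1)


set_option linter.unusedSectionVars false

section cvalfacts
variable {n : ℕ} [NeZero n]

lemma cval_lt (t a : Fin n) : cval t a < n := (a - t).isLt

lemma cval_self (t : Fin n) : cval t t = 0 := by simp [cval]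

lemma cval_inj (t : Fin n) : Function.Injective (cval t) := by
  intro a b h
  have h2 : a - t = b - t := Fin.val_injective h
  have := congrArg (· + t) h2
  simpa using this

lemma cval_eq_zero_iff (t a : Fin n) : cval t a = 0 ↔ a = t := by
  constructor
  · intro h; exact cval_inj t (by rw [h, cval_self])
  · rintro rfl; exact cval_self _

open Fin.CommRing in
/-- key shift formula -/
lemma cval_shift (t j x : Fin n) :
    cval j x = (cval t x + n - cval t j) % n := by
  have h1 : x - j = (x - t) - (j - t) := by ring
  have h2 : cval t j < n := cval_lt t j
  rw [cval, h1, Fin.sub_def]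
  simp only [cval]
  congr 1
  omega

lemma cval_shift_le {t j x : Fin n} (h : cval t j ≤ cval t x) :
    cval j x = cval t x - cval t j := by
  have h1 := cval_shift t j x
  have h2 : cval t x < n := cval_lt t x
  have h3 : cval t x + n - cval t j = (cval t x - cval t j) + n := by omega
  rw [h1, h3, Nat.add_mod_right, Nat.mod_eq_of_lt (by omega)]

lemma cval_shift_gt {t j x : Fin n} (h : cval t x < cval t j) :
    cval j x = cval t x + n - cval t j := by
  have h1 := cval_shift t j x
  have h2 : cval t j < n := cval_lt t j
  rw [h1, Nat.mod_eq_of_lt (by omega)]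

open Fin.CommRing in
lemma cval_succ_gen (a x : Fin n) : cval a x = (cval (a+1) x + 1) % n := by
  have h1 := cval_shift (t := a + 1) (j := a) (x := x)
  have h2 : cval (a+1) a = n - 1 := by
    have hn : 0 < n := Nat.pos_of_ne_zero (NeZero.ne n)
    have : a - (a + 1) = -1 := by ring
    have h3 : ((-1 : Fin n) : ℕ) = n - 1 := by
      rw [show (-1 : Fin n) = 0 - 1 by ring, Fin.sub_def]
      simp only [Fin.val_mk, Fin.val_zero, Fin.val_one']
      rcases Nat.lt_or_ge 1 n with h | h
      · rw [Nat.mod_eq_of_lt h, Nat.add_zero, Nat.mod_eq_of_lt (by omega)]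
      · have hn1 : n = 1 := by omega
        subst hn1; rfl
    rw [cval, this, h3]
  rw [h1, h2]
  have := cval_lt (a+1) x
  congr 1
  omega

lemma cval_succ_self (a : Fin n) : cval (a + 1) a = n - 1 := by
  have h := cval_succ_gen a a
  rw [cval_self] at h
  have h2 := cval_lt (a+1) a
  rcases Nat.lt_or_ge (cval (a+1) a + 1) n with h3 | h3
  · rw [Nat.mod_eq_of_lt h3] at h; omega
  · omega

lemma cval_succ {a x : Fin n} (hx : x ≠ a) :
    cval (a + 1) x = cval a x - 1 ∧ 1 ≤ cval a x := by
  have h := cval_succ_gen a x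
  have h2 := cval_lt (a+1) x
  have h4 : cval (a+1) x ≠ n - 1 := fun hc => hx (cval_inj (a+1) (by rw [hc, cval_succ_self]))
  rw [Nat.mod_eq_of_lt (by omega)] at h
  omega

end cvalfacts


section listlemmas
open List

lemma countP_split (l : List ℕ) (p : ℕ → Bool) (i : ℕ) :
    l.countP p = (l.take i).countP p + (l.drop i).countP p := by
  have h2 := List.countP_append (l₁ := l.take i) (l₂ := l.drop i) (p := p)
  rwa [List.take_append_drop] at h2

lemma sorted_get_le {l : List ℕ} (hl : l.Pairwise (· ≤ ·)) {i k : ℕ} (hik : i ≤ k)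
    (hk : k < l.length) : l[i]'(by omega) ≤ l[k] := by
  rcases Nat.eq_or_lt_of_le hik with h | h
  · subst h; exact le_refl _
  · simpa using hl.rel_get_of_lt (a := ⟨i, by omega⟩) (b := ⟨k, hk⟩) (by simpa using h)

/-- countP of suffix-bound for sorted lists -/
lemma sorted_countP_ge {l : List ℕ} (hl : l.Pairwise (· ≤ ·)) (i : ℕ) (hi : i < l.length) :
    l.length - i ≤ l.countP (fun x => decide (l[i] ≤ x)) := by
  rw [countP_split l _ i]
  have h3 : (l.drop i).countP (fun x => decide (l[i] ≤ x)) = (l.drop i).length := by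
    rw [List.countP_eq_length]
    intro a ha
    simp only [decide_eq_true_eq]
    obtain ⟨k, hk, rfl⟩ := List.getElem_of_mem ha
    rw [List.getElem_drop]
    exact sorted_get_le hl (Nat.le_add_right _ _) (by rw [List.length_drop] at hk; omega)
  rw [h3, List.length_drop]
  omega

lemma sorted_le_get_of_countP {l : List ℕ} (hl : l.Pairwise (· ≤ ·)) (v i : ℕ) (hi : i < l.length)
    (h : l.length - i ≤ l.countP (fun x => decide (v ≤ x))) : v ≤ l[i] := by
  by_contra hc
  push_neg at hc
  rw [countP_split l _ (i+1)] at h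
  have h3 : (l.take (i+1)).countP (fun x => decide (v ≤ x)) = 0 := by
    rw [List.countP_eq_zero]
    intro a ha
    simp only [decide_eq_true_eq]
    obtain ⟨k, hk, rfl⟩ := List.getElem_of_mem ha
    rw [List.length_take] at hk
    rw [List.getElem_take]
    have h5 : l[k]'(by omega) ≤ l[i] := sorted_get_le hl (by omega) hi
    omega
  have h4 : (l.drop (i+1)).countP (fun x => decide (v ≤ x)) ≤ l.length - (i+1) := by
    have := List.countP_le_length (l := l.drop (i+1)) (p := fun x => decide (v ≤ x))
    rwa [List.length_drop] at this
  omega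

/-- pointwise domination implies countP domination -/
lemma forall₂_countP_le {l₁ l₂ : List ℕ} (h : List.Forall₂ (· ≤ ·) l₁ l₂) (v : ℕ) :
    l₁.countP (fun x => decide (v ≤ x)) ≤ l₂.countP (fun x => decide (v ≤ x)) := by
  induction h with
  | nil => simp
  | @cons a b l₁' l₂' hab _ ih =>
    rw [List.countP_cons, List.countP_cons]
    have t1 : (if decide (v ≤ a) = true then 1 else 0) ≤
        (if decide (v ≤ b) = true then 1 else 0) := by
      by_cases hv : v ≤ a
      · simp [hv, le_trans hv hab]
      · simp [hv]
    omega

/-- counting criterion: converse -/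
lemma countP_forall₂ {l₁ l₂ : List ℕ} (h₁ : l₁.Pairwise (· ≤ ·)) (h₂ : l₂.Pairwise (· ≤ ·))
    (hlen : l₁.length = l₂.length)
    (h : ∀ v, l₁.countP (fun x => decide (v ≤ x)) ≤ l₂.countP (fun x => decide (v ≤ x))) :
    List.Forall₂ (· ≤ ·) l₁ l₂ := by
  rw [List.forall₂_iff_get]
  refine ⟨hlen, fun i hi1 hi2 => ?_⟩
  simp only [List.get_eq_getElem]
  apply sorted_le_get_of_countP h₂ _ i hi2
  calc l₂.length - i = l₁.length - i := by omega
  _ ≤ l₁.countP (fun x => decide (l₁[i] ≤ x)) := sorted_countP_ge h₁ i hi1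
  _ ≤ _ := h _

end listlemmas

section galecount
variable {n : ℕ} {f : Fin n → ℕ}

lemma countP_sort_image (A : Finset (Fin n)) (hf : Function.Injective f) (v : ℕ) :
    ((A.image f).sort (· ≤ ·)).countP (fun x => decide (v ≤ x)) =
      (A.filter (fun x => v ≤ f x)).card := by
  rw [List.Perm.countP_eq _ (Finset.sort_perm_toList _ _)]
  have h1 : (A.image f).toList.countP (fun x => decide (v ≤ x)) =
      Multiset.countP (fun x => v ≤ x) (A.image f).val := by
    conv_rhs => rw [← Multiset.coe_toList (A.image f).val]
    rw [Multiset.coe_countP]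
    rfl
  rw [h1, Multiset.countP_eq_card_filter, ← Finset.filter_val, Finset.filter_image,
    ← Finset.card_def, Finset.card_image_of_injective _ hf]

lemma length_sort_image (A : Finset (Fin n)) (hf : Function.Injective f) :
    ((A.image f).sort (· ≤ ·)).length = A.card := by
  rw [Finset.length_sort, Finset.card_image_of_injective _ hf]

lemma galeLEKey.card_eq {A B : Finset (Fin n)} (hf : Function.Injective f)
    (h : galeLEKey f A B) : A.card = B.card := by
  have := h.length_eq
  rwa [length_sort_image A hf, length_sort_image B hf] at this

lemma galeLEKey_count {A B : Finset (Fin n)} (hf : Function.Injective f)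
    (h : galeLEKey f A B) (v : ℕ) :
    (A.filter (fun x => v ≤ f x)).card ≤ (B.filter (fun x => v ≤ f x)).card := by
  rw [← countP_sort_image A hf, ← countP_sort_image B hf]
  exact forall₂_countP_le h v

lemma galeLEKey_refl' (A : Finset (Fin n)) : galeLEKey f A A :=
  List.forall₂_same.2 (fun _ _ => le_refl _)

lemma galeLEKey_of_count {A B : Finset (Fin n)} (hf : Function.Injective f)
    (hcard : A.card = B.card)
    (h : ∀ v, (A.filter (fun x => v ≤ f x)).card ≤ (B.filter (fun x => v ≤ f x)).card) :
    galeLEKey f A B := by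
  refine countP_forall₂ (Finset.pairwise_sort _ _) (Finset.pairwise_sort _ _) ?_ ?_
  · rw [length_sort_image A hf, length_sort_image B hf]; exact hcard
  · intro v
    rw [countP_sort_image A hf, countP_sort_image B hf]
    exact h v

lemma galeLEKey_refl (A : Finset (Fin n)) : galeLEKey f A A :=
  List.forall₂_same.2 (fun _ _ => le_refl _)

lemma galeLEKey_trans {A B C : Finset (Fin n)} (h1 : galeLEKey f A B) (h2 : galeLEKey f B C) :
    galeLEKey f A C := by
  unfold galeLEKey at h1 h2 ⊢
  rw [List.forall₂_iff_get] at h1 h2 ⊢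
  obtain ⟨e1, g1⟩ := h1
  obtain ⟨e2, g2⟩ := h2
  exact ⟨e1.trans e2, fun i hi1 hi2 => le_trans (g1 i hi1 (by omega)) (g2 i (by omega) hi2)⟩

end galecount

section necklace
variable {n : ℕ} [NeZero n] (P : DecoratedPerm n)

lemma mem_necklace {r i : Fin n} :
    i ∈ necklaceOf P r ↔
      (cval r i < cval r (P.π.symm i) ∨ (P.π i = i ∧ P.col i = -1)) := by
  simp [necklaceOf]

lemma symm_ne {a : Fin n} (h : P.π a ≠ a) : P.π.symm a ≠ a := by
  intro hc
  exact h (by conv_lhs => rw [← hc, Equiv.apply_symm_apply])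

lemma self_mem_necklace {a : Fin n} (h : P.π a ≠ a) : a ∈ necklaceOf P a := by
  rw [mem_necklace]
  left
  rw [cval_self]
  have := symm_ne P h
  have h2 := (cval_eq_zero_iff a (P.π.symm a)).not.2 this
  omega

lemma pi_not_mem_necklace {a : Fin n} (h : P.π a ≠ a) : P.π a ∉ necklaceOf P a := by
  rw [mem_necklace]
  push_neg
  constructor
  · rw [Equiv.symm_apply_apply, cval_self]; omega
  · intro hc
    exact absurd (P.π.injective hc) h

lemma fixedneg_mem_necklace {x : Fin n} (h : P.π x = x) (hc : P.col x = -1) (r : Fin n) :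
    x ∈ necklaceOf P r := (mem_necklace P).2 (Or.inr ⟨h, hc⟩)

lemma cval_succ_eq_pred_iff {a x : Fin n} : cval (a+1) x = n - 1 ↔ x = a := by
  constructor
  · intro h; exact cval_inj (a+1) (by rw [h, cval_succ_self])
  · rintro rfl; exact cval_succ_self _

lemma necklace_step_nonfixed {a : Fin n} (h : P.π a ≠ a) :
    necklaceOf P (a + 1) = insert (P.π a) (necklaceOf P a \ {a}) := by
  have hn1 : 0 < n := Nat.pos_of_ne_zero (NeZero.ne n)
  ext i
  rw [mem_necklace, Finset.mem_insert, Finset.mem_sdiff, Finset.mem_singleton, mem_necklace]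
  by_cases hi1 : i = P.π a
  · subst hi1
    have h1 : P.π.symm (P.π a) = a := Equiv.symm_apply_apply _ _
    have h2 : cval (a+1) (P.π a) < n - 1 := by
      have := cval_lt (a+1) (P.π a)
      have := (cval_succ_eq_pred_iff (a := a) (x := P.π a)).not.2 h
      omega
    simp only [h1, cval_succ_self]
    tauto
  · by_cases hi2 : i = a
    · subst hi2
      have h1 : P.π.symm i ≠ i := symm_ne P h
      have h2 : cval (i+1) (P.π.symm i) < n - 1 := by
        have := cval_lt (i+1) (P.π.symm i)
        have := (cval_succ_eq_pred_iff (a := i) (x := P.π.symm i)).not.2 h1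
        omega
      rw [cval_succ_self]
      constructor
      · rintro (h3 | h3)
        · omega
        · exact absurd h3.1 h
      · rintro (h3 | h3)
        · exact absurd h3 (fun hc => h hc.symm)
        · exact absurd rfl h3.2
    · -- i ≠ a, i ≠ π a, so π.symm i ≠ a
      have hs : P.π.symm i ≠ a := by
        intro hc
        apply hi1
        rw [← hc, Equiv.apply_symm_apply]
      obtain ⟨e1, e2⟩ := cval_succ (a := a) hi2
      obtain ⟨e3, e4⟩ := cval_succ (a := a) hs
      rw [e1, e3]
      constructor
      · rintro (h3 | h3)
        · right; exact ⟨Or.inl (by omega), hi2⟩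
        · right; exact ⟨Or.inr h3, hi2⟩
      · rintro (h3 | h3)
        · exact absurd h3 hi1
        · rcases h3.1 with h4 | h4
          · left; omega
          · right; exact h4

lemma necklace_step_fixed {a : Fin n} (h : P.π a = a) :
    necklaceOf P (a + 1) = necklaceOf P a := by
  ext i
  rw [mem_necklace, mem_necklace]
  by_cases hi2 : i = a
  · subst hi2
    have h1 : P.π.symm i = i := (Equiv.symm_apply_eq _).2 h.symm
    rw [h1]
    omega
  · have hs : P.π.symm i ≠ a := by
      intro hc
      apply hi2
      have h4 := congrArg P.π hc
      rw [Equiv.apply_symm_apply, h] at h4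
      exact h4
    obtain ⟨e1, e2⟩ := cval_succ (a := a) hi2
    obtain ⟨e3, e4⟩ := cval_succ (a := a) hs
    rw [e1, e3]
    omega

lemma necklace_card_step (a : Fin n) :
    (necklaceOf P (a + 1)).card = (necklaceOf P a).card := by
  by_cases h : P.π a = a
  · rw [necklace_step_fixed P h]
  · rw [necklace_step_nonfixed P h]
    have h1 : P.π a ∉ necklaceOf P a \ {a} := fun hc =>
      pi_not_mem_necklace P h (Finset.mem_sdiff.1 hc).1
    rw [Finset.card_insert_of_notMem h1,
      Finset.card_sdiff_of_subset (Finset.singleton_subset_iff.2 (self_mem_necklace P h))]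
    have : 0 < (necklaceOf P a).card := Finset.card_pos.2 ⟨a, self_mem_necklace P h⟩
    simp only [Finset.card_singleton]
    omega

open Fin.CommRing in
lemma necklace_card_eq (a b : Fin n) :
    (necklaceOf P a).card = (necklaceOf P b).card := by
  have key : ∀ (k : ℕ) (c : Fin n), (necklaceOf P (c + (k : Fin n))).card = (necklaceOf P c).card := by
    intro k
    induction k with
    | zero => intro c; simp
    | succ m ih =>
      intro c
      have : c + ((m + 1 : ℕ) : Fin n) = (c + (m : Fin n)) + 1 := by push_cast; ring
      rw [this, necklace_card_step, ih]
  have h2 : a + ((cval a b : ℕ) : Fin n) = b := by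
    have : ((cval a b : ℕ) : Fin n) = b - a := by
      rw [cval, Fin.cast_val_eq_self]
    rw [this]; ring
  calc (necklaceOf P a).card = (necklaceOf P (a + ((cval a b : ℕ) : Fin n))).card :=
        (key _ a).symm
    _ = (necklaceOf P b).card := by rw [h2]
  
end necklace

section keylemmas
variable {n : ℕ} [NeZero n]

lemma cmax_eq_singleton {a m : Fin n} {D : Finset (Fin n)} (hm : m ∈ D)
    (hmax : ∀ y ∈ D, cval a y ≤ cval a m) : cmax a D = {m} := by
  ext x
  rw [cmax, Finset.mem_filter, Finset.mem_singleton]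
  constructor
  · rintro ⟨hx, hx2⟩
    exact cval_inj a (le_antisymm (hmax x hx) (hx2 m hm))
  · rintro rfl
    exact ⟨hm, hmax⟩

lemma exists_cmax {a : Fin n} {D : Finset (Fin n)} (hD : D.Nonempty) :
    ∃ m, m ∈ D ∧ (∀ y ∈ D, cval a y ≤ cval a m) ∧ cmax a D = {m} := by
  obtain ⟨m, hm, hmax⟩ := D.exists_max_image (cval a) hD
  exact ⟨m, hm, hmax, cmax_eq_singleton hm hmax⟩

variable (P : DecoratedPerm n) {j : Fin n} (hj : P.π j ≠ j)

include hj in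
lemma necklace_diff_nonempty {a : Fin n} (ha : j ∉ necklaceOf P a) :
    (necklaceOf P a \ necklaceOf P j).Nonempty := by
  rw [Finset.sdiff_nonempty]
  intro hsub
  have h1 : necklaceOf P a = necklaceOf P j :=
    Finset.eq_of_subset_of_card_le hsub (le_of_eq (necklace_card_eq P j a))
  rw [h1] at ha
  exact ha (self_mem_necklace P hj)

/-- elements of `I_t` beyond `j` (in `t`-order) lie in `I_j`. -/
lemma mem_necklace_of_gt {t x : Fin n} (hx : x ∈ necklaceOf P t)
    (hgt : cval t j < cval t x) : x ∈ necklaceOf P j := by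
  rw [mem_necklace] at hx ⊢
  rcases hx with h1 | h1
  · left
    have e1 : cval j x = cval t x - cval t j := cval_shift_le (le_of_lt hgt)
    have e2 : cval j (P.π.symm x) = cval t (P.π.symm x) - cval t j :=
      cval_shift_le (by omega)
    omega
  · right; exact h1

/-- the `t`-maximum of `I_t \ I_j` lies strictly before `j`. -/
lemma maxkey_lt {t m : Fin n} (hjt : j ∉ necklaceOf P t)
    (hm : m ∈ necklaceOf P t \ necklaceOf P j) :
    cval t m < cval t j := by
  rw [Finset.mem_sdiff] at hm
  rcases Nat.lt_trichotomy (cval t m) (cval t j) with h | h | h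
  · exact h
  · exact absurd (cval_inj t h) (by rintro rfl; exact hjt hm.1)
  · exact absurd (mem_necklace_of_gt P hm.1 h) hm.2

end keylemmas

section galeswap
variable {n : ℕ} [NeZero n]

lemma filter_sdiff_singleton (A : Finset (Fin n)) (m : Fin n) (p : Fin n → Prop)
    [DecidablePred p] : (A \ {m}).filter p = (A.filter p) \ {m} := by
  ext x
  simp only [Finset.mem_filter, Finset.mem_sdiff, Finset.mem_singleton]
  tauto

lemma card_filter_swap {A : Finset (Fin n)} {m j' : Fin n} (hm : m ∈ A) (hj : j' ∉ A)
    (p : Fin n → Prop) [DecidablePred p] :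
    ((insert j' (A \ {m})).filter p).card + (if p m then 1 else 0) =
      (A.filter p).card + (if p j' then 1 else 0) := by
  have e1 : ((insert j' (A \ {m})).filter p).card =
      ((A \ {m}).filter p).card + (if p j' then 1 else 0) := by
    rw [Finset.filter_insert]
    split_ifs
    · rw [Finset.card_insert_of_notMem]
      intro hc
      exact hj (Finset.mem_sdiff.1 (Finset.mem_filter.1 hc).1).1
    · rw [Nat.add_zero]
  have e2 : ((A \ {m}).filter p).card + (if p m then 1 else 0) = (A.filter p).card := by
    rw [filter_sdiff_singleton]
    by_cases hpm : p m
    · have hmf : m ∈ A.filter p := Finset.mem_filter.2 ⟨hm, hpm⟩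
      rw [if_pos hpm, Finset.card_sdiff_of_subset (Finset.singleton_subset_iff.2 hmf),
        Finset.card_singleton]
      have : 0 < (A.filter p).card := Finset.card_pos.2 ⟨m, hmf⟩
      omega
    · have hmf : m ∉ A.filter p := fun hc => hpm (Finset.mem_filter.1 hc).2
      rw [if_neg hpm, Finset.sdiff_eq_self_of_disjoint (Finset.disjoint_singleton_right.2 hmf),
        Nat.add_zero]
  omega

lemma card_insert_sdiff {A : Finset (Fin n)} {m j' : Fin n} (hm : m ∈ A) (hj : j' ∉ A) :
    (insert j' (A \ {m})).card = A.card := by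
  rw [Finset.card_insert_of_notMem (fun hc => hj (Finset.mem_sdiff.1 hc).1),
    Finset.card_sdiff_of_subset (Finset.singleton_subset_iff.2 hm), Finset.card_singleton]
  have : 0 < A.card := Finset.card_pos.2 ⟨m, hm⟩
  omega

/-- swapping `m` for a later `j'` goes up in Gale order -/
lemma galeLEKey_swap {f : Fin n → ℕ} (hf : Function.Injective f) {A : Finset (Fin n)}
    {m j' : Fin n} (hm : m ∈ A) (hj : j' ∉ A) (hle : f m ≤ f j') :
    galeLEKey f A (insert j' (A \ {m})) := by
  apply galeLEKey_of_count hf (card_insert_sdiff hm hj).symm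
  intro v
  have h1 := card_filter_swap hm hj (fun x => v ≤ f x)
  by_cases h2 : v ≤ f m
  · rw [if_pos h2, if_pos (le_trans h2 hle)] at h1
    omega
  · rw [if_neg h2] at h1
    split_ifs at h1 <;> omega

end galeswap

section part2
variable {n : ℕ} [NeZero n] (P : DecoratedPerm n) {j : Fin n} (hj : P.π j ≠ j)

lemma phiK_of_mem {t : Fin n} (hjt : j ∈ necklaceOf P t) :
    insert j (necklaceOf P t \ phiSet (necklaceOf P) j t) = necklaceOf P t := by
  rw [phiSet, if_pos hjt]
  ext x
  simp only [Finset.mem_insert, Finset.mem_sdiff, Finset.mem_singleton]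
  constructor
  · rintro (rfl | hx); exacts [hjt, hx.1]
  · intro hx
    by_cases hxj : x = j
    exacts [Or.inl hxj, Or.inr ⟨hx, hxj⟩]

include hj in
lemma phiK_of_not_mem {t : Fin n} (hjt : j ∉ necklaceOf P t) :
    ∃ m, m ∈ necklaceOf P t ∧ m ∉ necklaceOf P j ∧
      (∀ y ∈ necklaceOf P t \ necklaceOf P j, cval t y ≤ cval t m) ∧
      cval t m < cval t j ∧
      insert j (necklaceOf P t \ phiSet (necklaceOf P) j t) =
        insert j (necklaceOf P t \ {m}) := by
  obtain ⟨m, hm, hmax, hsing⟩ := exists_cmax (a := t) (necklace_diff_nonempty P hj hjt)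
  rw [Finset.mem_sdiff] at hm
  refine ⟨m, hm.1, hm.2, hmax, maxkey_lt P hjt (Finset.mem_sdiff.2 hm), ?_⟩
  rw [phiSet, if_neg hjt, hsing]

include hj in
lemma gale_forward {t : Fin n} {H : Finset (Fin n)} (hjt : j ∉ necklaceOf P t)
    {m : Fin n} (hm : m ∈ necklaceOf P t)
    (hmax : ∀ y ∈ necklaceOf P t \ necklaceOf P j, cval t y ≤ cval t m)
    (hmc : cval t m < cval t j)
    (hjH : j ∈ H) (hIH : ∀ s, galeLE s (necklaceOf P s) H) :
    galeLE t (insert j (necklaceOf P t \ {m})) H := by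
  have hfinj : Function.Injective (cval t) := cval_inj t
  have hcardIH : (necklaceOf P t).card = H.card := galeLEKey.card_eq hfinj (hIH t)
  apply galeLEKey_of_count hfinj (by rw [card_insert_sdiff hm hjt]; exact hcardIH)
  intro v
  have h1 := card_filter_swap hm hjt (fun x => v ≤ cval t x)
  have hIt := galeLEKey_count hfinj (hIH t) v
  by_cases hv1 : v ≤ cval t m
  · rw [if_pos hv1, if_pos (by omega : v ≤ cval t j)] at h1
    omega
  · by_cases hv2 : cval t j < v
    · rw [if_neg hv1, if_neg (by omega : ¬ v ≤ cval t j)] at h1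
      omega
    · -- main case: cval t m < v ≤ cval t j
      push_neg at hv2
      rw [if_neg hv1, if_pos hv2] at h1
      push_neg at hv1
      have hcn : cval t j < n := cval_lt t j
      set c := cval t j with hc
      set S1 := (necklaceOf P t).filter (fun x => v ≤ cval t x ∧ cval t x < c) with hS1
      set S2 := (necklaceOf P t).filter (fun x => c + 1 ≤ cval t x) with hS2
      set T1 := H.filter (fun x => v ≤ cval t x ∧ cval t x < c) with hT1
      set Tj := H.filter (fun x => cval t x = c) with hTj
      set T2 := H.filter (fun x => c + 1 ≤ cval t x) with hT2
      -- split the I-count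
      have eqS : (necklaceOf P t).filter (fun x => v ≤ cval t x) = S1 ∪ S2 := by
        ext x
        simp only [hS1, hS2, Finset.mem_union, Finset.mem_filter]
        constructor
        · rintro ⟨hx, hv⟩
          have hne : cval t x ≠ c := fun he => hjt ((hfinj he) ▸ hx)
          by_cases h : cval t x < c
          · exact Or.inl ⟨hx, hv, h⟩
          · exact Or.inr ⟨hx, by omega⟩
        · rintro (⟨hx, hv⟩ | ⟨hx, hv⟩)
          · exact ⟨hx, hv.1⟩
          · exact ⟨hx, by omega⟩
      have cardS : ((necklaceOf P t).filter (fun x => v ≤ cval t x)).card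
          = S1.card + S2.card := by
        rw [eqS, Finset.card_union_of_disjoint]
        rw [Finset.disjoint_left]
        intro x hx1 hx2
        rw [hS1, Finset.mem_filter] at hx1
        rw [hS2, Finset.mem_filter] at hx2
        omega
      -- the H side contains three disjoint pieces
      have hsubH : T1 ∪ Tj ∪ T2 ⊆ H.filter (fun x => v ≤ cval t x) := by
        intro x hx
        simp only [hT1, hTj, hT2, Finset.mem_union, Finset.mem_filter] at hx
        rw [Finset.mem_filter]
        rcases hx with (⟨hx, hv⟩ | ⟨hx, hv⟩) | ⟨hx, hv⟩
        · exact ⟨hx, hv.1⟩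
        · exact ⟨hx, by omega⟩
        · exact ⟨hx, by omega⟩
      have cardH : T1.card + Tj.card + T2.card ≤
          (H.filter (fun x => v ≤ cval t x)).card := by
        have d1 : Disjoint T1 Tj := by
          rw [Finset.disjoint_left]
          intro x hx1 hx2
          rw [hT1, Finset.mem_filter] at hx1
          rw [hTj, Finset.mem_filter] at hx2
          omega
        have d2 : Disjoint (T1 ∪ Tj) T2 := by
          rw [Finset.disjoint_left]
          intro x hx1 hx2
          rw [hT2, Finset.mem_filter] at hx2
          rcases Finset.mem_union.1 hx1 with hx1 | hx1
          · rw [hT1, Finset.mem_filter] at hx1; omega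
          · rw [hTj, Finset.mem_filter] at hx1; omega
        calc T1.card + Tj.card + T2.card
            = (T1 ∪ Tj ∪ T2).card := by
              rw [Finset.card_union_of_disjoint d2, Finset.card_union_of_disjoint d1]
          _ ≤ _ := Finset.card_le_card hsubH
      -- Tj has j
      have hTjcard : 1 ≤ Tj.card :=
        Finset.card_pos.2 ⟨j, Finset.mem_filter.2 ⟨hjH, rfl⟩⟩
      -- T2 dominates S2
      have hT2card : S2.card ≤ T2.card := galeLEKey_count hfinj (hIH t) (c + 1)
      -- T1 dominates S1, via the j-th necklace condition
      have hT1card : S1.card ≤ T1.card := by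
        have hsub1 : S1 ⊆ (necklaceOf P j).filter (fun x => v + n - c ≤ cval j x) := by
          intro x hx
          rw [hS1, Finset.mem_filter] at hx
          obtain ⟨hxt, hxv, hxc⟩ := hx
          rw [Finset.mem_filter]
          constructor
          · by_contra hxj
            have := hmax x (Finset.mem_sdiff.2 ⟨hxt, hxj⟩)
            omega
          · rw [cval_shift_gt (t := t) hxc]
            omega
        have hsub2 : H.filter (fun x => v + n - c ≤ cval j x) ⊆ T1 := by
          intro x hx
          rw [Finset.mem_filter] at hx
          obtain ⟨hxH, hxw⟩ := hx
          rw [hT1, Finset.mem_filter]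
          refine ⟨hxH, ?_⟩
          have hxn : cval t x < n := cval_lt t x
          by_cases hxc : cval t x < c
          · rw [cval_shift_gt (t := t) hxc] at hxw
            exact ⟨by omega, hxc⟩
          · push_neg at hxc
            rw [cval_shift_le (t := t) hxc] at hxw
            omega
        calc S1.card ≤ ((necklaceOf P j).filter (fun x => v + n - c ≤ cval j x)).card :=
              Finset.card_le_card hsub1
          _ ≤ (H.filter (fun x => v + n - c ≤ cval j x)).card :=
              galeLEKey_count (cval_inj j) (hIH j) (v + n - c)
          _ ≤ T1.card := Finset.card_le_card hsub2
      omega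

end part2

section part1
variable {n : ℕ} [NeZero n]

lemma insert_sdiff_self_of_mem {A : Finset (Fin n)} {a : Fin n} (ha : a ∈ A) :
    insert a (A \ {a}) = A := by
  rw [← Finset.erase_eq, Finset.insert_erase ha]

lemma insert_sdiff_cancel' (S : Finset (Fin n)) (x : Fin n) :
    (insert x S) \ {x} = S \ {x} := by
  ext y
  simp only [Finset.mem_sdiff, Finset.mem_insert, Finset.mem_singleton]
  tauto

lemma insert_swap_helper {A : Finset (Fin n)} {m a : Fin n} (j' : Fin n) (hm : m ∈ A)
    (hma : m ≠ a) :
    insert m (insert j' ((A \ {m}) \ {a})) = insert j' (A \ {a}) := by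
  ext x
  simp only [Finset.mem_insert, Finset.mem_sdiff, Finset.mem_singleton]
  constructor
  · rintro (rfl | rfl | ⟨⟨h1, h2⟩, h3⟩)
    · exact Or.inr ⟨hm, hma⟩
    · exact Or.inl rfl
    · exact Or.inr ⟨h1, h3⟩
  · rintro (rfl | ⟨h1, h2⟩)
    · exact Or.inr (Or.inl rfl)
    · by_cases hxm : x = m
      · exact Or.inl hxm
      · exact Or.inr (Or.inr ⟨⟨h1, hxm⟩, h2⟩)

lemma sdiff_pair_comm (A : Finset (Fin n)) (a b : Fin n) :
    (A \ {a}) \ {b} = (A \ {b}) \ {a} := by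
  ext x
  simp only [Finset.mem_sdiff, Finset.mem_singleton]
  tauto

lemma insert_pair_comm (A : Finset (Fin n)) (a b : Fin n) :
    insert a (insert b A) = insert b (insert a A) := by
  ext x
  simp only [Finset.mem_insert]
  tauto

lemma step_of_eq {K1 K2 : Finset (Fin n)} {a : Fin n} (h : K2 = K1) :
    (a ∈ K1 → ∃ x, K2 = insert x (K1 \ {a})) ∧ (a ∉ K1 → K2 = K1) :=
  ⟨fun ha => ⟨a, by rw [h, _root_.insert_sdiff_self_of_mem ha]⟩, fun _ => h⟩

variable (P : DecoratedPerm n) {j : Fin n} (hj : P.π j ≠ j)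

lemma fixed_mem_necklace_iff {a : Fin n} (h : P.π a = a) :
    a ∈ necklaceOf P a ↔ P.col a = -1 := by
  rw [mem_necklace]
  have h1 : P.π.symm a = a := (Equiv.symm_apply_eq _).2 h.symm
  rw [h1]
  constructor
  · rintro (h2 | h2)
    · omega
    · exact h2.2
  · intro h2; exact Or.inr ⟨h, h2⟩

include hj in
/-- The Grassmann necklace step property of K. -/
lemma K_necklace_step (a : Fin n) :
    (a ∈ insert j (necklaceOf P a \ phiSet (necklaceOf P) j a) →
      ∃ x, insert j (necklaceOf P (a+1) \ phiSet (necklaceOf P) j (a+1)) =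
        insert x ((insert j (necklaceOf P a \ phiSet (necklaceOf P) j a)) \ {a})) ∧
    (a ∉ insert j (necklaceOf P a \ phiSet (necklaceOf P) j a) →
      insert j (necklaceOf P (a+1) \ phiSet (necklaceOf P) j (a+1)) =
        insert j (necklaceOf P a \ phiSet (necklaceOf P) j a)) := by
  by_cases haj : a = j
  · -- case a = j
    subst haj
    have hjIa : a ∈ necklaceOf P a := self_mem_necklace P hj
    have hKa : insert a (necklaceOf P a \ phiSet (necklaceOf P) a a) = necklaceOf P a :=
      phiK_of_mem P hjIa
    have hstep : necklaceOf P (a+1) = insert (P.π a) (necklaceOf P a \ {a}) :=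
      necklace_step_nonfixed P hj
    have hpaIa : P.π a ∉ necklaceOf P a := pi_not_mem_necklace P hj
    have hjIa1 : a ∉ necklaceOf P (a+1) := by
      rw [hstep, Finset.mem_insert]
      rintro (h | h)
      · exact hj h.symm
      · exact (Finset.mem_sdiff.1 h).2 (Finset.mem_singleton_self a)
    obtain ⟨m, hm1, hm2, hmax, hmc, hKa1⟩ := phiK_of_not_mem P hj hjIa1
    have hmpa : m = P.π a := by
      rw [hstep, Finset.mem_insert] at hm1
      rcases hm1 with h | h
      · exact h
      · exact absurd (Finset.mem_sdiff.1 h).1 hm2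
    have eqKK : insert a (necklaceOf P (a+1) \ phiSet (necklaceOf P) a (a+1)) =
        insert a (necklaceOf P a \ phiSet (necklaceOf P) a a) := by
      rw [hKa1, hmpa, hstep, insert_sdiff_cancel',
        Finset.sdiff_eq_self_of_disjoint (Finset.disjoint_singleton_right.2
          (fun hc => hpaIa (Finset.mem_sdiff.1 hc).1)),
        _root_.insert_sdiff_self_of_mem hjIa, hKa]
    exact step_of_eq eqKK
  · by_cases hfix : P.π a = a
    · -- fixed point a ≠ j
      have hstep : necklaceOf P (a+1) = necklaceOf P a := necklace_step_fixed P hfix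
      by_cases hjIa : j ∈ necklaceOf P a
      · have eqKK : insert j (necklaceOf P (a+1) \ phiSet (necklaceOf P) j (a+1)) =
            insert j (necklaceOf P a \ phiSet (necklaceOf P) j a) := by
          rw [phiK_of_mem P hjIa, phiK_of_mem P (hstep ▸ hjIa), hstep]
        exact step_of_eq eqKK
      · obtain ⟨m, hm1, hm2, hmax, hmc, hKa⟩ := phiK_of_not_mem P hj hjIa
        have hmD : m ∈ necklaceOf P a \ necklaceOf P j := Finset.mem_sdiff.2 ⟨hm1, hm2⟩
        have haD : a ∉ necklaceOf P a \ necklaceOf P j := by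
          rw [Finset.mem_sdiff]
          rintro ⟨h1, h2⟩
          exact h2 (fixedneg_mem_necklace P hfix ((fixed_mem_necklace_iff P hfix).1 h1) j)
        have hma : m ≠ a := fun hc => haD (hc ▸ hmD)
        have hmax' : ∀ y ∈ necklaceOf P a \ necklaceOf P j, cval (a+1) y ≤ cval (a+1) m := by
          intro y hy
          have hya : y ≠ a := fun hc => haD (hc ▸ hy)
          obtain ⟨e1, e2⟩ := cval_succ (a := a) hya
          obtain ⟨e3, e4⟩ := cval_succ (a := a) hma
          have := hmax y hy
          omega
        have eqKK : insert j (necklaceOf P (a+1) \ phiSet (necklaceOf P) j (a+1)) =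
            insert j (necklaceOf P a \ phiSet (necklaceOf P) j a) := by
          rw [hKa]
          have hphi : phiSet (necklaceOf P) j (a+1) = {m} := by
            rw [phiSet, if_neg (hstep ▸ hjIa), hstep, cmax_eq_singleton hmD hmax']
          rw [hphi, hstep]
        exact step_of_eq eqKK
    · -- a not fixed, a ≠ j
      have hstep : necklaceOf P (a+1) = insert (P.π a) (necklaceOf P a \ {a}) :=
        necklace_step_nonfixed P hfix
      have haIa : a ∈ necklaceOf P a := self_mem_necklace P hfix
      have hpaIa : P.π a ∉ necklaceOf P a := pi_not_mem_necklace P hfix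
      have ha1 : a ∉ necklaceOf P (a+1) := by
        rw [hstep, Finset.mem_insert]
        rintro (h | h)
        · exact hfix h.symm
        · exact (Finset.mem_sdiff.1 h).2 (Finset.mem_singleton_self a)
      by_cases hpaj : P.π a = j
      · -- π a = j
        have hjIa : j ∉ necklaceOf P a := hpaj ▸ hpaIa
        have hjIa1 : j ∈ necklaceOf P (a+1) := by
          rw [hstep, hpaj]; exact Finset.mem_insert_self _ _
        have hK1 : insert j (necklaceOf P (a+1) \ phiSet (necklaceOf P) j (a+1)) =
            insert j (necklaceOf P a \ {a}) := by
          rw [phiK_of_mem P hjIa1, hstep, hpaj]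
        obtain ⟨m, hm1, hm2, hmax, hmc, hKa⟩ := phiK_of_not_mem P hj hjIa
        by_cases hma : m = a
        · have eqKK : insert j (necklaceOf P (a+1) \ phiSet (necklaceOf P) j (a+1)) =
              insert j (necklaceOf P a \ phiSet (necklaceOf P) j a) := by
            rw [hK1, hKa, hma]
          exact step_of_eq eqKK
        · have haKa : a ∈ insert j (necklaceOf P a \ phiSet (necklaceOf P) j a) := by
            rw [hKa, Finset.mem_insert]
            exact Or.inr (Finset.mem_sdiff.2 ⟨haIa, by
              rw [Finset.mem_singleton]; exact fun hc => hma hc.symm⟩)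
          refine ⟨fun _ => ⟨m, ?_⟩, fun h => absurd haKa h⟩
          rw [hK1, hKa, Finset.insert_sdiff_of_notMem _
            (by rw [Finset.mem_singleton]; exact fun hc => haj hc.symm :
              j ∉ ({a} : Finset (Fin n))),
            insert_swap_helper j hm1 hma]
      · -- general case: π a ∉ {a, j}, a ≠ j
        have hjmem : j ∈ necklaceOf P (a+1) ↔ j ∈ necklaceOf P a := by
          rw [hstep, Finset.mem_insert, Finset.mem_sdiff, Finset.mem_singleton]
          constructor
          · rintro (h | h)
            · exact absurd h.symm hpaj
            · exact h.1
          · intro h; exact Or.inr ⟨h, haj ∘ Eq.symm⟩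
        by_cases hjIa : j ∈ necklaceOf P a
        · have hKa : insert j (necklaceOf P a \ phiSet (necklaceOf P) j a) =
              necklaceOf P a := phiK_of_mem P hjIa
          have hK1 : insert j (necklaceOf P (a+1) \ phiSet (necklaceOf P) j (a+1)) =
              necklaceOf P (a+1) := phiK_of_mem P (hjmem.2 hjIa)
          refine ⟨fun _ => ⟨P.π a, ?_⟩, fun h => absurd (by rw [hKa]; exact haIa) h⟩
          rw [hK1, hKa, hstep]
        · have hjIa1 : j ∉ necklaceOf P (a+1) := fun h => hjIa (hjmem.1 h)
          obtain ⟨m, hm1, hm2, hmax, hmc, hKa⟩ := phiK_of_not_mem P hj hjIa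
          obtain ⟨m', hm'1, hm'2, hmax', hmc', hKa1⟩ := phiK_of_not_mem P hj hjIa1
          have hm'a : m' ≠ a := fun hc => ha1 (hc ▸ hm'1)
          by_cases hma : m = a
          · -- D has max a, so I a \ {a} ⊆ I j
            have subIj : ∀ x ∈ necklaceOf P a, x ≠ a → x ∈ necklaceOf P j := by
              intro x hx hxa
              by_contra hc
              have h1 := hmax x (Finset.mem_sdiff.2 ⟨hx, hc⟩)
              rw [hma, cval_self] at h1
              exact hxa ((cval_eq_zero_iff a x).1 (by omega))
            have hm'pa : m' = P.π a := by
              rw [hstep, Finset.mem_insert] at hm'1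
              rcases hm'1 with h | h
              · exact h
              · rw [Finset.mem_sdiff, Finset.mem_singleton] at h
                exact absurd (subIj _ h.1 h.2) hm'2
            have eqKK : insert j (necklaceOf P (a+1) \ phiSet (necklaceOf P) j (a+1)) =
                insert j (necklaceOf P a \ phiSet (necklaceOf P) j a) := by
              rw [hKa1, hm'pa, hstep, insert_sdiff_cancel',
                Finset.sdiff_eq_self_of_disjoint (Finset.disjoint_singleton_right.2
                  (fun hc => hpaIa (Finset.mem_sdiff.1 hc).1)),
                hKa, hma]
            exact step_of_eq eqKK
          · have haKa : a ∈ insert j (necklaceOf P a \ phiSet (necklaceOf P) j a) := by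
              rw [hKa, Finset.mem_insert]
              exact Or.inr (Finset.mem_sdiff.2 ⟨haIa, by
                rw [Finset.mem_singleton]; exact fun hc => hma hc.symm⟩)
            have hpam : P.π a ≠ m := fun hc => hpaIa (hc ▸ hm1)
            by_cases hm'pa : m' = P.π a
            · refine ⟨fun _ => ⟨m, ?_⟩, fun h => absurd haKa h⟩
              rw [hKa1, hm'pa, hstep, insert_sdiff_cancel',
                Finset.sdiff_eq_self_of_disjoint (Finset.disjoint_singleton_right.2
                  (fun hc => hpaIa (Finset.mem_sdiff.1 hc).1)),
                hKa, Finset.insert_sdiff_of_notMem _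
                  (by rw [Finset.mem_singleton]; exact fun hc => haj hc.symm :
                    j ∉ ({a} : Finset (Fin n))),
                insert_swap_helper j hm1 hma]
            · -- m' = m
              have hm'Ia : m' ∈ necklaceOf P a := by
                rw [hstep, Finset.mem_insert] at hm'1
                rcases hm'1 with h | h
                · exact absurd h hm'pa
                · exact (Finset.mem_sdiff.1 h).1
              have h1 : cval a m' ≤ cval a m := hmax m' (Finset.mem_sdiff.2 ⟨hm'Ia, hm'2⟩)
              have h2 : cval (a+1) m ≤ cval (a+1) m' := by
                apply hmax'
                rw [Finset.mem_sdiff]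
                refine ⟨?_, hm2⟩
                rw [hstep, Finset.mem_insert]
                exact Or.inr (Finset.mem_sdiff.2 ⟨hm1, by
                  rw [Finset.mem_singleton]; exact hma⟩)
              have hmm' : m' = m := by
                apply cval_inj a
                obtain ⟨e1, e2⟩ := cval_succ (a := a) hma
                obtain ⟨e3, e4⟩ := cval_succ (a := a) hm'a
                omega
              refine ⟨fun _ => ⟨P.π a, ?_⟩, fun h => absurd haKa h⟩
              rw [hKa1, hmm', hstep, hKa,
                Finset.insert_sdiff_of_notMem _
                  (by rw [Finset.mem_singleton]; exact hpam :
                    P.π a ∉ ({m} : Finset (Fin n))),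
                insert_pair_comm, sdiff_pair_comm,
                Finset.insert_sdiff_of_notMem _
                  (by rw [Finset.mem_singleton]; exact fun hc => haj hc.symm :
                    j ∉ ({a} : Finset (Fin n)))]

end part1

section final
variable {n : ℕ} [NeZero n] (P : DecoratedPerm n) {j : Fin n} (hj : P.π j ≠ j)

include hj in
lemma j_mem_of_galeK {H : Finset (Fin n)}
    (h : galeLE (j+1) (insert j (necklaceOf P (j+1) \ phiSet (necklaceOf P) j (j+1))) H) :
    j ∈ H := by
  have hinj := cval_inj (n := n) (j+1)
  have hcount := galeLEKey_count hinj
    (h : galeLEKey (cval (j+1)) (insert j (necklaceOf P (j+1) \ phiSet (necklaceOf P) j (j+1))) H)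
    (n-1)
  have h1 : 0 < ((insert j (necklaceOf P (j+1) \ phiSet (necklaceOf P) j (j+1))).filter
      (fun x => n-1 ≤ cval (j+1) x)).card :=
    Finset.card_pos.2 ⟨j, Finset.mem_filter.2 ⟨Finset.mem_insert_self _ _,
      by rw [cval_succ_self]⟩⟩
  have h2 : 0 < (H.filter (fun x => n-1 ≤ cval (j+1) x)).card := by omega
  obtain ⟨x, hx⟩ := Finset.card_pos.1 h2
  obtain ⟨hxH, hxv⟩ := Finset.mem_filter.1 hx
  have h3 : cval (j+1) x < n := cval_lt _ _
  have h4 : x = j := cval_succ_eq_pred_iff.1 (by omega)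
  exact h4 ▸ hxH

end final

/-- if `j` is a non-fixed point, then `M' = {H ∈ M : j ∈ H}` is itself a
positroid, with Grassmann necklace `K_a = (I_a \ {phi(a)}) ∪ {j}`. -/
theorem contraction_is_positroid (n : ℕ) [NeZero n] (P : DecoratedPerm n) (j : Fin n)
    (hj : P.π j ≠ j) :
    IsGrassmannNecklace
      (fun a : Fin n => insert j (necklaceOf P a \ phiSet (necklaceOf P) j a)) ∧
    ∀ H : Finset (Fin n),
      (j ∈ H ∧ ∀ t : Fin n, galeLE t (necklaceOf P t) H) ↔
      (∀ t : Fin n,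
        galeLE t (insert j (necklaceOf P t \ phiSet (necklaceOf P) j t)) H) := by
  constructor
  · intro i
    exact K_necklace_step P hj i
  · intro H
    constructor
    · rintro ⟨hjH, hIH⟩ t
      by_cases hjt : j ∈ necklaceOf P t
      · rw [phiK_of_mem P hjt]
        exact hIH t
      · obtain ⟨m, hm1, hm2, hmax, hmc, hK⟩ := phiK_of_not_mem P hj hjt
        rw [hK]
        exact gale_forward P hj hjt hm1 hmax hmc hjH hIH
    · intro hK
      have hjH : j ∈ H := j_mem_of_galeK P hj (hK (j+1))
      refine ⟨hjH, fun t => ?_⟩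
      by_cases hjt : j ∈ necklaceOf P t
      · have h := hK t
        rwa [phiK_of_mem P hjt] at h
      · obtain ⟨m, hm1, hm2, hmax, hmc, hKe⟩ := phiK_of_not_mem P hj hjt
        have h1 : galeLEKey (cval t) (necklaceOf P t) (insert j (necklaceOf P t \ {m})) :=
          galeLEKey_swap (cval_inj t) hm1 hjt (le_of_lt hmc)
        have h2 := hK t
        rw [hKe] at h2
        exact galeLEKey_trans h1 h2
end

section
/- For a Grassmann necklace (I_1,...,I_n) with associated decorated permutation (π, col) and any r ∈ [n], the formula I_r = { i ∈ [n] : i <_r π⁻¹(i), or (π(i) = i and col(i) = -1) } holds, where <_r is the linear order r <_r r+1 <_r ... <_r r-1. -/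
open Finset

open Fin.NatCast Fin.CommRing

lemma my_cval_eq {n : ℕ} (t a : Fin n) :
    cval t a = if t.val ≤ a.val then a.val - t.val else a.val + n - t.val := by
  have ht := t.isLt; have ha := a.isLt
  unfold cval
  rw [Fin.sub_def]
  simp only
  split_ifs with h
  · have h1 : n - t.val + a.val = (a.val - t.val) + n := by omega
    rw [h1, Nat.add_mod_right, Nat.mod_eq_of_lt (by omega)]
  · rw [Nat.mod_eq_of_lt (by omega)]
    omega

lemma my_cval_lt {n : ℕ} (t a : Fin n) : cval t a < n := (a - t).isLt

lemma my_add_cval {n : ℕ} [NeZero n] (t a : Fin n) :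
    t + ((cval t a : ℕ) : Fin n) = a := by
  unfold cval
  rw [Fin.cast_val_eq_self, add_comm, sub_add_cancel]

lemma my_cval_add {n : ℕ} [NeZero n] (t : Fin n) (k : ℕ) :
    cval t (t + (k : Fin n)) = k % n := by
  unfold cval
  rw [add_comm t, add_sub_cancel_right, Fin.val_natCast]

lemma my_cval_self {n : ℕ} [NeZero n] (t : Fin n) : cval t t = 0 := by
  unfold cval
  rw [sub_self, Fin.val_zero]

lemma my_cval_cmp {n : ℕ} (x b r : Fin n) (hb : b ≠ x) (hr : r ≠ x) :
    cval x b < cval x r ↔ cval r x < cval r b := by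
  have hx := x.isLt; have hbb := b.isLt; have hrr := r.isLt
  have hb' : b.val ≠ x.val := fun h => hb (Fin.ext h)
  have hr' : r.val ≠ x.val := fun h => hr (Fin.ext h)
  rw [my_cval_eq, my_cval_eq, my_cval_eq, my_cval_eq]
  split_ifs <;> omega

/-- for a Grassmann necklace `I` with associated decorated permutation
`(π, col)`, the formula `I_r = { i : i <_r π⁻¹(i) or (π(i) = i and col(i) = -1) }` holds. -/
theorem necklace_formula (n : ℕ) [NeZero n] (I : Fin n → Finset (Fin n))
    (P : DecoratedPerm n) (hI : IsGrassmannNecklace I) (hC : Corresponds I P) :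
    ∀ r : Fin n, I r = necklaceOf P r := by
  have L1 : ∀ a : Fin n, a ∉ I a → I (a+1) = I a := fun a h => (hI a).2 h
  have Lpi1 : ∀ a : Fin n, a ∉ I a → P.π a = a ∧ P.col a = 1 :=
    fun a h => (hC a).1 ⟨L1 a h, h⟩
  have L3 : ∀ a : Fin n, P.π a ≠ a → a ∈ I a := by
    intro a h
    by_contra hc
    exact h (Lpi1 a hc).1
  have L2 : ∀ a : Fin n, a ∈ I a → I (a+1) = insert (P.π a) (I a \ {a}) := by
    intro a ha
    obtain ⟨j, hj⟩ := (hI a).1 ha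
    by_cases hja : j = a
    · rw [hja] at hj
      have hIa : I (a+1) = I a := by
        rw [hj, Finset.sdiff_singleton_eq_erase, Finset.insert_erase ha]
      have hfix := (hC a).2.1 ⟨hIa, ha⟩
      rw [hfix.1, hIa, Finset.sdiff_singleton_eq_erase, Finset.insert_erase ha]
    · rw [(hC a).2.2 j hja ha hj]; exact hj
  have Lcol : ∀ a : Fin n, P.π a = a → (a ∈ I a ↔ P.col a = -1) := by
    intro a hpi
    constructor
    · intro ha
      have hIa : I (a+1) = I a := by
        rw [L2 a ha, hpi, Finset.sdiff_singleton_eq_erase, Finset.insert_erase ha]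
      exact ((hC a).2.1 ⟨hIa, ha⟩).2
    · intro hcol
      by_contra ha
      have := (Lpi1 a ha).2
      omega
  have step : ∀ a x : Fin n, x ≠ a → P.π a ≠ x → (x ∈ I (a+1) ↔ x ∈ I a) := by
    intro a x hxa hpx
    by_cases ha : a ∈ I a
    · rw [L2 a ha]
      simp only [Finset.mem_insert, Finset.mem_sdiff, Finset.mem_singleton]
      constructor
      · rintro (h | ⟨h, -⟩)
        · exact absurd h.symm hpx
        · exact h
      · intro h
        exact Or.inr ⟨h, hxa⟩
    · rw [L1 a ha]
  have key : ∀ x r : Fin n,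
      (x ∈ I r ↔ (cval r x < cval r (P.π.symm x) ∨ (P.π x = x ∧ P.col x = -1))) := by
    intro x r
    by_cases hx : P.π x = x
    · -- fixed point case
      have hsymm : P.π.symm x = x := by
        conv_lhs => rw [← hx]
        exact P.π.symm_apply_apply x
      have hconst : ∀ a : Fin n, (x ∈ I (a+1) ↔ x ∈ I a) := by
        intro a
        by_cases hax : x = a
        · subst hax
          by_cases hxx : x ∈ I x
          · rw [L2 x hxx]
            simp [hx, hxx]
          · rw [L1 x hxx]
        · refine step a x hax ?_
          intro h
          exact hax (P.π.injective (h.trans hx.symm)).symm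
      have hk : ∀ k : ℕ, (x ∈ I (x + (k : Fin n)) ↔ x ∈ I x) := by
        intro k
        induction k with
        | zero => simp
        | succ k ih =>
          have hcast : ((k+1 : ℕ) : Fin n) = (k : Fin n) + 1 := by push_cast; ring
          rw [hcast, ← add_assoc, hconst (x + (k : Fin n))]
          exact ih
      have hr : x ∈ I r ↔ x ∈ I x := by
        conv_lhs => rw [← my_add_cval x r]
        exact hk (cval x r)
      rw [hr, hsymm]
      simp [lt_irrefl, hx, Lcol x hx]
    · -- non-fixed case
      set b := P.π.symm x with hbdef
      have hpib : P.π b = x := P.π.apply_symm_apply x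
      have hbx : b ≠ x := by
        intro h
        rw [h] at hpib
        exact hx hpib
      have hbb : b ∈ I b := L3 b (fun h => hbx (hpib.symm.trans h).symm)
      have hxnot : x ∉ I (x + 1) := by
        by_cases hxx : x ∈ I x
        · rw [L2 x hxx]
          intro h
          rcases Finset.mem_insert.mp h with h1 | h2
          · exact hx h1.symm
          · exact (Finset.mem_sdiff.mp h2).2 (Finset.mem_singleton.mpr rfl)
        · rw [L1 x hxx]; exact hxx
      have cval_inj : ∀ a c : Fin n, cval x a = cval x c → a = c := by
        intro a c h
        have ha := my_add_cval x a
        have hc := my_add_cval x c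
        rw [h] at ha
        exact ha.symm.trans hc
      have claim : ∀ k : ℕ, 1 ≤ k → k ≤ n → (x ∈ I (x + (k : Fin n)) ↔ cval x b < k) := by
        intro k hk1
        induction k, hk1 using Nat.le_induction with
        | base =>
          intro _
          rw [Nat.cast_one]
          constructor
          · intro h; exact absurd h hxnot
          · intro h
            exfalso
            have h0 : cval x b = 0 := by omega
            have := my_add_cval x b
            rw [h0, Nat.cast_zero, add_zero] at this
            exact hbx this.symm
        | succ k hk ih =>
          intro hkn
          have hklt : k < n := by omega
          have ihh := ih (by omega)
          have hcast : ((k+1 : ℕ) : Fin n) = (k : Fin n) + 1 := by push_cast; ring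
          set a := x + (k : Fin n) with hadef
          have hcva : cval x a = k := by rw [hadef, my_cval_add, Nat.mod_eq_of_lt hklt]
          have hax : x ≠ a := by
            intro h
            rw [← h, my_cval_self] at hcva
            omega
          rw [hcast, ← add_assoc, ← hadef]
          by_cases hab : a = b
          · have haI : a ∈ I a := hab ▸ hbb
            have hpia : P.π a = x := hab ▸ hpib
            have hcvb : cval x b = k := by rw [← hab, hcva]
            rw [L2 a haI]
            constructor
            · intro _; omega
            · intro _; exact Finset.mem_insert.mpr (Or.inl hpia.symm)
          · have hpax : P.π a ≠ x := by
              intro h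
              exact hab (P.π.injective (h.trans hpib.symm))
            rw [step a x hax hpax, ihh]
            have hne : cval x b ≠ k := fun h => hab (cval_inj a b (by rw [hcva, h]))
            omega
      by_cases hrx : r = x
      · subst hrx
        have hc := claim n (Nat.one_le_iff_ne_zero.mpr (NeZero.ne n)) le_rfl
        rw [Fin.natCast_self, add_zero] at hc
        have hblt : cval r b < n := my_cval_lt r b
        have hb0 : cval r b ≠ 0 := by
          intro h
          have := my_add_cval r b
          rw [h, Nat.cast_zero, add_zero] at this
          exact hbx this.symm
        rw [hc]
        have h0 : cval r r = 0 := my_cval_self r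
        constructor
        · intro _; left; omega
        · intro _; omega
      · have hk1 : 1 ≤ cval x r := by
          rcases Nat.eq_zero_or_pos (cval x r) with h | h
          · exfalso
            apply hrx
            have := my_add_cval x r
            rw [h, Nat.cast_zero, add_zero] at this
            exact this.symm
          · exact h
        have hkn : cval x r ≤ n := le_of_lt (my_cval_lt x r)
        have hc := claim (cval x r) hk1 hkn
        rw [my_add_cval x r] at hc
        rw [hc, my_cval_cmp x b r hbx hrx]
        simp [hx]
  intro r
  ext x
  rw [necklaceOf]
  simp only [Finset.mem_filter, Finset.mem_univ, true_and]
  exact key x r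
end
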